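/- Let E ⊂ ℝ^d be compact, m a Borel measure on E, and t > 0, and suppose there exist C > 0 and r₀ > 0 such that m(B(x,r)) ≥ C·r^t for all x ∈ E and 0 < r < r₀. Then the notion of weak (t,l)-tangent plane is independent of the choice of such a measure: if V ∈ G(d,l) satisfies liminf_{r→0} m(B(a,r) \ V_a(δr))/r^t = 0 for all 0 < δ < 1 with respect to one such measure m, and m' is another Borel measure on E satisfying the same lower regularity bound, and in addition m' is absolutely bounded above by a constant times m on balls (m'(B(x,r)) ≤ C'·r^t), then V is also a weak (t,l)-tangent plane with respect to m'. -/

import Mathlib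

open Metric Set Filter MeasureTheory

abbrev Euc (d : ℕ) := EuclideanSpace ℝ (Fin d)

/-- Projection onto the orthogonal complement of `V`. -/
noncomputable def projQ {d : ℕ} (V : Submodule ℝ (Euc d)) : Euc d →L[ℝ] Euc d :=
  Vᗮ.subtypeL.comp (Submodule.orthogonalProjectionOnto Vᗮ)

/-- `V_a(δ)`: the `δ`-neighborhood of the affine plane `V + a`. -/
noncomputable def planeNbhd {d : ℕ} (a : Euc d) (V : Submodule ℝ (Euc d)) (δ : ℝ) :
    Set (Euc d) :=
  {x | ‖projQ V (x - a)‖ < δ}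

/-- `V` is a weak `(t,l)`-tangent plane for `E` at `a` with respect to `m`. -/
def IsWeakTangentPlane {d : ℕ} (m : Measure (Euc d)) (t : ℝ) (a : Euc d)
    (V : Submodule ℝ (Euc d)) : Prop :=
  ∀ δ : ℝ, 0 < δ → δ < 1 →
    Filter.liminf
      (fun r : ℝ => m (ball a r \ planeNbhd a V (δ * r)) / ENNReal.ofReal (r ^ t))
      (nhdsWithin 0 (Set.Ioi 0)) = 0

lemma norm_projQ_le {d : ℕ} (V : Submodule ℝ (Euc d)) (v : Euc d) :
    ‖projQ V v‖ ≤ ‖v‖ := by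
  have h : ‖Submodule.orthogonalProjectionOnto Vᗮ v‖ ≤ ‖v‖ := by
    calc ‖Submodule.orthogonalProjectionOnto Vᗮ v‖ ≤ ‖(Submodule.orthogonalProjectionOnto Vᗮ : Euc d →L[ℝ] Vᗮ)‖ * ‖v‖ :=
          (Submodule.orthogonalProjectionOnto Vᗮ : Euc d →L[ℝ] Vᗮ).le_opNorm v
      _ ≤ 1 * ‖v‖ :=
          mul_le_mul_of_nonneg_right (Submodule.orthogonalProjectionOnto_norm_le _) (norm_nonneg _)
      _ = ‖v‖ := one_mul _
  simpa [projQ] using h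

/-- the notion of weak `(t,l)`-tangent plane is independent of
the choice of a lower-regular measure, given an upper bound for the second
measure. -/
theorem statement10 {d l : ℕ} (h0 : 0 < l) (hld : l < d)
    (E : Set (Euc d)) (hE : IsCompact E)
    (m m' : Measure (Euc d)) (t : ℝ) (ht : 0 < t)
    (C C' : ℝ) (hC : 0 < C) (hC' : 0 < C') (r₀ : ℝ) (hr₀ : 0 < r₀)
    (hlow : ∀ x ∈ E, ∀ r : ℝ, 0 < r → r < r₀ →
      ENNReal.ofReal (C * r ^ t) ≤ m (ball x r))
    (hlow' : ∀ x ∈ E, ∀ r : ℝ, 0 < r → r < r₀ →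
      ENNReal.ofReal (C * r ^ t) ≤ m' (ball x r))
    (hupp' : ∀ x ∈ E, ∀ r : ℝ, 0 < r → r < r₀ →
      m' (ball x r) ≤ ENNReal.ofReal (C' * r ^ t))
    (hm : m (Eᶜ) = 0) (hm' : m' (Eᶜ) = 0)
    (a : Euc d) (ha : a ∈ E)
    (V : Submodule ℝ (Euc d)) (hV : Module.finrank ℝ V = l)
    (htang : IsWeakTangentPlane m t a V) :
    IsWeakTangentPlane m' t a V := by
  intro δ hδ0 hδ1
  set c : ℝ := δ / 4 with hc
  have hc0 : 0 < c := by positivity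
  have hc1 : c < 1 := by rw [hc]; linarith
  refine le_antisymm ?_ (zero_le)
  -- Key geometric lemma: smallness of the `m`-measure at scale `r` forces the
  -- set `E` to avoid the region at scale `(1-c)r`, so `m'` of it vanishes.
  have key : ∀ r : ℝ, 0 < r → r < r₀ →
      m (ball a r \ planeNbhd a V ((δ/2) * r)) < ENNReal.ofReal (C * (c*r)^t) →
      m' (ball a ((1-c)*r) \ planeNbhd a V (δ * ((1-c)*r))) = 0 := by
    intro r hr hrr₀ hlt
    have hsub : ball a ((1-c)*r) \ planeNbhd a V (δ * ((1-c)*r)) ⊆ Eᶜ := by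
      intro x hx
      by_contra hxE
      simp only [mem_compl_iff, not_not] at hxE
      obtain ⟨hxball, hxplane⟩ := hx
      simp only [planeNbhd, mem_setOf_eq, not_lt] at hxplane
      -- `ball x (c*r)` sits inside the bad region at scale `r`
      have hball : ball x (c*r) ⊆ ball a r \ planeNbhd a V ((δ/2) * r) := by
        intro y hy
        have hyx : dist y x < c * r := mem_ball.mp hy
        have hxa : dist x a < (1-c) * r := mem_ball.mp hxball
        constructor
        · have : dist y a ≤ dist y x + dist x a := dist_triangle _ _ _
          have : dist y a < c * r + (1-c) * r := by linarith
          rw [mem_ball]; linarith [this]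
        · simp only [planeNbhd, mem_setOf_eq, not_lt]
          have hdiff : ‖projQ V (y - x)‖ ≤ ‖y - x‖ := norm_projQ_le V _
          have hyx' : ‖y - x‖ < c * r := by rwa [← dist_eq_norm]
          have hxa' : δ * ((1-c) * r) ≤ ‖projQ V (x - a)‖ := hxplane
          have hsplit : projQ V (y - a) = projQ V (x - a) + projQ V (y - x) := by
            rw [← map_add]; congr 1; abel
          have : ‖projQ V (x - a)‖ ≤ ‖projQ V (y - a)‖ + ‖projQ V (y - x)‖ := by
            calc ‖projQ V (x - a)‖ = ‖projQ V (y - a) - projQ V (y - x)‖ := by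
                  rw [hsplit]; congr 1; abel
              _ ≤ ‖projQ V (y - a)‖ + ‖projQ V (y - x)‖ := norm_sub_le _ _
          have hkey : δ * ((1-c) * r) - c * r ≤ ‖projQ V (y - a)‖ := by
            nlinarith [norm_nonneg (projQ V (y - a))]
          have harith : δ/2 * r ≤ δ * ((1-c) * r) - c * r := by
            have h4 : (0:ℝ) ≤ δ/2 - c * (1 + δ) := by
              rw [hc]; nlinarith
            nlinarith [mul_nonneg hr.le h4]
          linarith
      have hlow1 := hlow x hxE (c*r) (by positivity)
        (lt_of_lt_of_le (by nlinarith) (le_of_lt hrr₀))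
      have : ENNReal.ofReal (C * (c*r)^t) ≤ m (ball a r \ planeNbhd a V ((δ/2) * r)) :=
        le_trans hlow1 (measure_mono hball)
      exact absurd (lt_of_le_of_lt this hlt) (lt_irrefl _)
    exact measure_mono_null hsub hm'
  -- From the tangent hypothesis for `m`, the quotient is frequently small.
  have h1 := htang (δ/2) (by positivity) (by linarith)
  have hCc : (0:ℝ) < C * c ^ t := by positivity
  have hfr : ∃ᶠ r in nhdsWithin (0:ℝ) (Set.Ioi 0),
      m (ball a r \ planeNbhd a V ((δ/2) * r)) / ENNReal.ofReal (r ^ t)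
        < ENNReal.ofReal (C * c ^ t) := by
    refine frequently_lt_of_liminf_lt (by isBoundedDefault) ?_
    rw [h1]
    exact ENNReal.ofReal_pos.mpr hCc
  have hev : ∀ᶠ r in nhdsWithin (0:ℝ) (Set.Ioi 0), 0 < r ∧ r < r₀ := by
    have h2 : ∀ᶠ r in nhdsWithin (0:ℝ) (Set.Ioi 0), r ∈ Set.Ioi (0:ℝ) :=
      eventually_mem_nhdsWithin
    have h3 : ∀ᶠ r in nhdsWithin (0:ℝ) (Set.Ioi 0), r < r₀ :=
      eventually_nhdsWithin_of_eventually_nhds (Filter.Tendsto.eventually_lt_const hr₀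
        (Continuous.tendsto continuous_id 0))
    filter_upwards [h2, h3] with r hr2 hr3
    exact ⟨hr2, hr3⟩
  have hfr2 : ∃ᶠ r in nhdsWithin (0:ℝ) (Set.Ioi 0),
      m' (ball a ((1-c)*r) \ planeNbhd a V (δ * ((1-c)*r))) /
        ENNReal.ofReal (((1-c)*r) ^ t) ≤ 0 := by
    refine (hfr.and_eventually hev).mono ?_
    rintro r ⟨hsmall, hr, hrr₀⟩
    have hrt : (0:ℝ) < r ^ t := by positivity
    have hne0 : ENNReal.ofReal (r ^ t) ≠ 0 := by
      simp [ENNReal.ofReal_eq_zero, not_le, hrt]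
    have hnetop : ENNReal.ofReal (r ^ t) ≠ ⊤ := ENNReal.ofReal_ne_top
    have hmul : m (ball a r \ planeNbhd a V ((δ/2) * r))
        < ENNReal.ofReal (C * (c*r)^t) := by
      have := (ENNReal.div_lt_iff (Or.inl hne0) (Or.inl hnetop)).mp hsmall
      calc m (ball a r \ planeNbhd a V ((δ/2) * r))
          < ENNReal.ofReal (C * c ^ t) * ENNReal.ofReal (r ^ t) := this
        _ = ENNReal.ofReal (C * (c*r)^t) := by
            rw [← ENNReal.ofReal_mul (le_of_lt hCc)]
            congr 1
            rw [Real.mul_rpow (le_of_lt hc0) (le_of_lt hr)]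
            ring
    have := key r hr hrr₀ hmul
    rw [this, ENNReal.zero_div]
  -- Push forward along `r ↦ (1-c) r`.
  have htend : Tendsto (fun r : ℝ => (1-c)*r)
      (nhdsWithin (0:ℝ) (Set.Ioi 0)) (nhdsWithin (0:ℝ) (Set.Ioi 0)) := by
    rw [tendsto_nhdsWithin_iff]
    constructor
    · have : Tendsto (fun r : ℝ => (1-c)*r) (nhds 0) (nhds ((1-c)*0)) :=
        (continuous_const.mul continuous_id).tendsto 0
      rw [mul_zero] at this
      exact this.mono_left nhdsWithin_le_nhds
    · filter_upwards [eventually_mem_nhdsWithin] with r hr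
      exact mul_pos (by linarith : (0:ℝ) < 1 - c) hr
  have hfr3 : ∃ᶠ s in nhdsWithin (0:ℝ) (Set.Ioi 0),
      m' (ball a s \ planeNbhd a V (δ * s)) / ENNReal.ofReal (s ^ t) ≤ 0 :=
    htend.frequently hfr2
  exact liminf_le_of_frequently_le' hfr3
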